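/- Consider the slice category Top↓ℝ equipped with the flow T defined below. Two objects (X,f) and (Y,g) are weakly ε-interleaved with respect to T if and only if there exists a homeomorphism Φ : X → Y such that |f(x) − g(Φ(x))| ≤ ε for every x ∈ X. Consequently the interleaving distance d_((Top↓ℝ),T)((X,f),(Y,g)) equals d_∞((X,f),(Y,g)), defined as the infimum over all homeomorphisms Φ : X → Y of sup_{x∈X} |f(x) − g(Φ(x))| (and equal to ∞ if X and Y are not homeomorphic). -/

import Mathlib

open CategoryTheory
open scoped NNReal ENNReal

universe v u

/-- A flow on a category `C`: a lax monoidal action of `([0,∞), ≤, +)` on `C`. -/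
structure CatFlow (C : Type u) [Category.{v} C] where
  /-- the `ε`-translation endofunctors -/
  T : ℝ≥0 → C ⥤ C
  /-- the natural transformations `T ε ⟶ T ζ` for `ε ≤ ζ` -/
  Tle : ∀ {ε ζ : ℝ≥0}, ε ≤ ζ → (T ε ⟶ T ζ)
  Tle_refl : ∀ ε : ℝ≥0, Tle (le_refl ε) = 𝟙 (T ε)
  Tle_trans : ∀ {ε ζ δ : ℝ≥0} (h₁ : ε ≤ ζ) (h₂ : ζ ≤ δ), Tle h₁ ≫ Tle h₂ = Tle (h₁.trans h₂)
  /-- the unit coherence natural transformation `𝟭 C ⟶ T 0` -/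
  u : 𝟭 C ⟶ T 0
  /-- the multiplication coherence transformations; note `(T ζ ⋙ T ε).obj a = (T ε).obj ((T ζ).obj a)`,
  which is the composite `T_ε ∘ T_ζ` of the paper. -/
  μ : ∀ ε ζ : ℝ≥0, T ζ ⋙ T ε ⟶ T (ε + ζ)
  unit_left : ∀ (ε : ℝ≥0) (a : C),
    u.app ((T ε).obj a) ≫ (μ 0 ε).app a = eqToHom (by simp)
  unit_right : ∀ (ε : ℝ≥0) (a : C),
    (T ε).map (u.app a) ≫ (μ ε 0).app a = eqToHom (by simp)
  assoc : ∀ (ε ζ δ : ℝ≥0) (a : C),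
    (μ ε ζ).app ((T δ).obj a) ≫ (μ (ε + ζ) δ).app a
      = (T ε).map ((μ ζ δ).app a) ≫ (μ ε (ζ + δ)).app a ≫ eqToHom (by rw [add_assoc])
  compat : ∀ {ε ζ δ κ : ℝ≥0} (h₁ : ε ≤ δ) (h₂ : ζ ≤ κ) (a : C),
    (μ ε ζ).app a ≫ (Tle (add_le_add h₁ h₂)).app a
      = (T ε).map ((Tle h₂).app a) ≫ (Tle h₁).app ((T κ).obj a) ≫ (μ δ κ).app a

/-- `(φ, ψ)` is a weak `ε`-interleaving of `a` and `b`. -/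
structure IsWeakInterleaving {C : Type u} [Category.{v} C] (F : CatFlow C) (ε : ℝ≥0)
    (a b : C) (φ : a ⟶ (F.T ε).obj b) (ψ : b ⟶ (F.T ε).obj a) : Prop where
  left : φ ≫ (F.T ε).map ψ ≫ (F.μ ε ε).app a
      = F.u.app a ≫ (F.Tle (show (0:ℝ≥0) ≤ ε + ε from zero_le)).app a
  right : ψ ≫ (F.T ε).map φ ≫ (F.μ ε ε).app b
      = F.u.app b ≫ (F.Tle (show (0:ℝ≥0) ≤ ε + ε from zero_le)).app b

/-- `a` and `b` are weakly `ε`-interleaved. -/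
def WeaklyInterleaved {C : Type u} [Category.{v} C] (F : CatFlow C) (ε : ℝ≥0) (a b : C) : Prop :=
  ∃ φ ψ, IsWeakInterleaving F ε a b φ ψ

/-- The interleaving distance associated to a flow. -/
noncomputable def interleavingDist {C : Type u} [Category.{v} C] (F : CatFlow C) (a b : C) :
    ℝ≥0∞ :=
  sInf { x : ℝ≥0∞ | ∃ ε : ℝ≥0, x = ε ∧ WeaklyInterleaved F ε a b }

noncomputable section OverR

open Set

/-- The category of `ℝ`-spaces: the slice category `Top ↓ ℝ`. -/
abbrev RSpaces : Type 1 := Over (TopCat.of ℝ)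

/-- The value of the reference map of an `ℝ`-space at a point. -/
def fval (a : RSpaces) (x : a.left) : ℝ := a.hom x

/-- The `ε`-translation of an `ℝ`-space: `(X, f) ↦ (X × [-ε, ε], (x,t) ↦ f x + t)`. -/
def thickObj (ε : ℝ≥0) (a : RSpaces) : RSpaces :=
  Over.mk (Y := TopCat.of (a.left × (Icc (-(ε:ℝ)) (ε:ℝ))))
    (TopCat.ofHom (ContinuousMap.mk
      (fun (p : a.left × (Icc (-(ε:ℝ)) (ε:ℝ))) => fval a p.1 + (p.2 : ℝ))
      (by
        have hc : Continuous (fval a) := ContinuousMap.continuous a.hom.hom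
        exact (hc.comp continuous_fst).add (continuous_subtype_val.comp continuous_snd))))

/-- The `ε`-translation functor on `ℝ`-spaces. -/
def thickT (ε : ℝ≥0) : RSpaces ⥤ RSpaces where
  obj a := thickObj ε a
  map {a b} φ := Over.homMk
    (TopCat.ofHom (ContinuousMap.mk
      (fun (p : a.left × (Icc (-(ε:ℝ)) (ε:ℝ))) =>
        ((φ.left p.1, p.2) : b.left × (Icc (-(ε:ℝ)) (ε:ℝ))))
      (((ContinuousMap.continuous φ.left.hom).comp continuous_fst).prodMk continuous_snd)))
    (by
      ext p
      obtain ⟨x, t⟩ := p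
      show fval b (φ.left x) + (t : ℝ) = fval a x + (t : ℝ)
      exact congrArg (fun r => r + (t : ℝ))
        (congrArg (fun (f : a.left ⟶ TopCat.of ℝ) => f x) (Over.w φ)))
  map_id a := by
    ext p
    rfl
  map_comp φ ψ := by
    ext p
    rfl

lemma mem_Icc_add {ε ζ : ℝ≥0} {t s : ℝ} (ht : t ∈ Icc (-(ζ:ℝ)) (ζ:ℝ))
    (hs : s ∈ Icc (-(ε:ℝ)) (ε:ℝ)) :
    t + s ∈ Icc (-((ε + ζ : ℝ≥0) : ℝ)) ((ε + ζ : ℝ≥0) : ℝ) := by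
  rcases ht with ⟨h1, h2⟩
  rcases hs with ⟨h3, h4⟩
  constructor <;> (push_cast; linarith)

/-- The cast morphism `(thickT ε).obj a ⟶ (thickT ζ).obj a` associated to an equality
`ε = ζ`. -/
def castHom {ε ζ : ℝ≥0} (h : ε = ζ) (a : RSpaces) :
    (thickT ε).obj a ⟶ (thickT ζ).obj a :=
  Over.homMk
    (TopCat.ofHom (ContinuousMap.mk (fun (p : a.left × (Icc (-(ε:ℝ)) (ε:ℝ))) =>
        ((p.1, ⟨(p.2 : ℝ), by rw [← h]; exact p.2.2⟩) : a.left × (Icc (-(ζ:ℝ)) (ζ:ℝ))))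
      (continuous_fst.prodMk
        ((continuous_subtype_val.comp continuous_snd).subtype_mk
          (fun (p : a.left × (Icc (-(ε:ℝ)) (ε:ℝ))) => by rw [← h]; exact p.2.2)))))
    (by ext p; rfl)

lemma eqToHom_thickT {ε ζ : ℝ≥0} (h : ε = ζ) (a : RSpaces) :
    eqToHom (show (thickT ε).obj a = (thickT ζ).obj a by rw [h]) = castHom h a := by
  subst h
  simp only [eqToHom_refl]
  ext p
  rfl

/-- The flow on the slice category `Top ↓ ℝ` of `ℝ`-spaces, whose `ε`-translation is
`(X, f) ↦ (X × [-ε, ε], (x,t) ↦ f x + t)`. -/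
def overFlowR : CatFlow RSpaces where
  T := thickT
  Tle {ε ζ} h :=
    { app := fun a => Over.homMk
        (TopCat.ofHom (ContinuousMap.mk (fun (p : a.left × (Icc (-(ε:ℝ)) (ε:ℝ))) =>
            ((p.1, ⟨(p.2 : ℝ),
            Set.Icc_subset_Icc (neg_le_neg (NNReal.coe_le_coe.2 h)) (NNReal.coe_le_coe.2 h)
              p.2.2⟩) : a.left × (Icc (-(ζ:ℝ)) (ζ:ℝ))))
          (continuous_fst.prodMk
            ((continuous_subtype_val.comp continuous_snd).subtype_mk
              (fun (p : a.left × (Icc (-(ε:ℝ)) (ε:ℝ))) =>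
                Set.Icc_subset_Icc (neg_le_neg (NNReal.coe_le_coe.2 h))
                (NNReal.coe_le_coe.2 h) p.2.2)))))
        (by ext p; rfl)
      naturality := fun a b φ => by ext p; rfl }
  Tle_refl ε := by
    ext a p
    rfl
  Tle_trans h₁ h₂ := by
    ext a p
    rfl
  u :=
    { app := fun a => Over.homMk
        (TopCat.ofHom (ContinuousMap.mk (fun (x : a.left) =>
            ((x, ⟨0, by constructor <;> simp⟩) :
              a.left × (Icc (-((0:ℝ≥0):ℝ)) ((0:ℝ≥0):ℝ))))
          (continuous_id.prodMk continuous_const)))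
        (by
          ext x
          show fval a x + (0 : ℝ) = fval a x
          exact add_zero _)
      naturality := fun a b φ => by ext p; rfl }
  μ ε ζ :=
    { app := fun a => Over.homMk
        (TopCat.ofHom (ContinuousMap.mk
          (fun (p : (a.left × (Icc (-(ζ:ℝ)) (ζ:ℝ))) × (Icc (-(ε:ℝ)) (ε:ℝ))) =>
            ((p.1.1, ⟨(p.1.2 : ℝ) + (p.2 : ℝ), mem_Icc_add p.1.2.2 p.2.2⟩) :
              a.left × (Icc (-((ε + ζ : ℝ≥0) : ℝ)) ((ε + ζ : ℝ≥0) : ℝ))))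
          ((continuous_fst.comp continuous_fst).prodMk
            (((continuous_subtype_val.comp (continuous_snd.comp continuous_fst)).add
              (continuous_subtype_val.comp continuous_snd)).subtype_mk
                (fun (q : (a.left × (Icc (-(ζ:ℝ)) (ζ:ℝ))) × (Icc (-(ε:ℝ)) (ε:ℝ))) =>
                  mem_Icc_add q.1.2.2 q.2.2)))))
        (by
          ext p
          obtain ⟨⟨x, t⟩, s⟩ := p
          show fval a x + ((t : ℝ) + (s : ℝ)) = (fval a x + (t : ℝ)) + (s : ℝ)
          exact (add_assoc _ _ _).symm)
      naturality := fun a b φ => by ext p; rfl }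
  unit_left ε a := by
    rw [eqToHom_thickT (zero_add ε).symm a]
    ext p
    obtain ⟨x, t⟩ := p
    refine Prod.ext rfl (Subtype.ext ?_)
    show ((t : ℝ) + 0) = (t : ℝ)
    exact add_zero _
  unit_right ε a := by
    rw [eqToHom_thickT (add_zero ε).symm a]
    ext p
    obtain ⟨x, t⟩ := p
    refine Prod.ext rfl (Subtype.ext ?_)
    show ((0 : ℝ) + (t : ℝ)) = (t : ℝ)
    exact zero_add _
  assoc ε ζ δ a := by
    rw [eqToHom_thickT (add_assoc ε ζ δ).symm a]
    ext p
    obtain ⟨⟨⟨x, t1⟩, t2⟩, t3⟩ := p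
    refine Prod.ext rfl (Subtype.ext ?_)
    show ((t1 : ℝ) + ((t2 : ℝ) + (t3 : ℝ)))
        = ((t1 : ℝ) + (t2 : ℝ)) + (t3 : ℝ)
    exact (add_assoc _ _ _).symm
  compat h₁ h₂ a := by
    ext p
    rfl

end OverR

lemma weaklyInterleaved_iff_exists (a b : RSpaces) (ε : ℝ≥0) :
    WeaklyInterleaved overFlowR ε a b ↔
      ∃ Φ : a.left ≃ₜ b.left, ∀ x : a.left, |fval a x - fval b (Φ x)| ≤ (ε : ℝ) := by
  constructor
  · rintro ⟨φ, ψ, h⟩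
    have hl : ∀ x : a.left,
        (((ψ.left ((φ.left x).1)).1, (⟨((ψ.left ((φ.left x).1)).2 : ℝ) + ((φ.left x).2 : ℝ),
            mem_Icc_add (ψ.left ((φ.left x).1)).2.2 (φ.left x).2.2⟩ :
            Set.Icc (-((ε+ε : ℝ≥0):ℝ)) ((ε+ε : ℝ≥0):ℝ)))
          = (x, ⟨0, by constructor <;> simp⟩)) :=
      fun x => ConcreteCategory.congr_hom (congrArg CommaMorphism.left h.left) x
    have hr : ∀ y : b.left,
        (((φ.left ((ψ.left y).1)).1, (⟨((φ.left ((ψ.left y).1)).2 : ℝ) + ((ψ.left y).2 : ℝ),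
            mem_Icc_add (φ.left ((ψ.left y).1)).2.2 (ψ.left y).2.2⟩ :
            Set.Icc (-((ε+ε : ℝ≥0):ℝ)) ((ε+ε : ℝ≥0):ℝ)))
          = (y, ⟨0, by constructor <;> simp⟩)) :=
      fun y => ConcreteCategory.congr_hom (congrArg CommaMorphism.left h.right) y
    refine ⟨⟨⟨fun x => (φ.left x).1, fun y => (ψ.left y).1,
        fun x => congrArg Prod.fst (hl x), fun y => congrArg Prod.fst (hr y)⟩,
        continuous_fst.comp φ.left.hom.continuous, continuous_fst.comp ψ.left.hom.continuous⟩, ?_⟩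
    intro x
    have hw : fval b ((φ.left x).1) + ((φ.left x).2 : ℝ) = fval a x :=
      ConcreteCategory.congr_hom (Over.w φ) x
    have hm := (φ.left x).2.2
    show |fval a x - fval b ((φ.left x).1)| ≤ (ε : ℝ)
    rw [abs_le]
    constructor <;> [linarith [hm.1]; linarith [hm.2]]
  · rintro ⟨Φ, hΦ⟩
    have hΦ' : ∀ y : b.left, |fval b y - fval a (Φ.symm y)| ≤ (ε : ℝ) := by
      intro y
      have h1 := hΦ (Φ.symm y)
      rw [Φ.apply_symm_apply] at h1
      rw [abs_sub_comm]
      exact h1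
    have hca : Continuous (fval a) := a.hom.hom.continuous
    have hcb : Continuous (fval b) := b.hom.hom.continuous
    refine ⟨Over.homMk (TopCat.ofHom (ContinuousMap.mk
        (fun (x : a.left) => ((Φ x, ⟨fval a x - fval b (Φ x), Set.mem_Icc.2 (abs_le.1 (hΦ x))⟩) : b.left × Set.Icc (-(ε:ℝ)) (ε:ℝ)))
        (Φ.continuous.prodMk
          ((hca.sub (hcb.comp Φ.continuous)).subtype_mk _))))
        (by ext x; show fval b (Φ x) + (fval a x - fval b (Φ x)) = fval a x; ring),
      Over.homMk (TopCat.ofHom (ContinuousMap.mk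
        (fun (y : b.left) => ((Φ.symm y, ⟨fval b y - fval a (Φ.symm y), Set.mem_Icc.2 (abs_le.1 (hΦ' y))⟩) : a.left × Set.Icc (-(ε:ℝ)) (ε:ℝ)))
        (Φ.symm.continuous.prodMk
          ((hcb.sub (hca.comp Φ.symm.continuous)).subtype_mk _))))
        (by ext y; show fval a (Φ.symm y) + (fval b y - fval a (Φ.symm y)) = fval b y; ring),
      ?_, ?_⟩
    · ext x
      refine Prod.ext_iff.mpr ?_
      refine ⟨Φ.symm_apply_apply x, Subtype.ext ?_⟩
      show (fval b (Φ x) - fval a (Φ.symm (Φ x))) + (fval a x - fval b (Φ x)) = 0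
      rw [Φ.symm_apply_apply]; ring
    · ext y
      refine Prod.ext_iff.mpr ?_
      refine ⟨Φ.apply_symm_apply y, Subtype.ext ?_⟩
      show (fval a (Φ.symm y) - fval b (Φ (Φ.symm y))) + (fval b y - fval a (Φ.symm y)) = 0
      rw [Φ.apply_symm_apply]; ring

/-- Two `ℝ`-spaces `(X,f)` and `(Y,g)` are weakly `ε`-interleaved for the flow on
`Top ↓ ℝ` iff there is a homeomorphism `Φ : X → Y` with `|f x - g (Φ x)| ≤ ε` for all
`x`; consequently the interleaving distance coincides with the extended `L∞`-distance
`d_∞((X,f),(Y,g)) = inf_Φ sup_x |f x - g (Φ x)|` (which is `∞` if `X ≄ Y`). -/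
theorem overFlowR_interleaving_iff (a b : RSpaces) :
    (∀ ε : ℝ≥0, WeaklyInterleaved overFlowR ε a b ↔
      ∃ Φ : a.left ≃ₜ b.left, ∀ x : a.left, |fval a x - fval b (Φ x)| ≤ (ε : ℝ)) ∧
    interleavingDist overFlowR a b =
      ⨅ Φ : a.left ≃ₜ b.left, ⨆ x : a.left, ENNReal.ofReal |fval a x - fval b (Φ x)| := by
  refine ⟨weaklyInterleaved_iff_exists a b, ?_⟩
  have key : ∀ (ε : ℝ≥0) (Φ : a.left ≃ₜ b.left),
      (∀ x : a.left, |fval a x - fval b (Φ x)| ≤ (ε : ℝ)) ↔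
        (⨆ x : a.left, ENNReal.ofReal |fval a x - fval b (Φ x)|) ≤ (ε : ℝ≥0∞) := by
    intro ε Φ
    rw [iSup_le_iff]
    constructor
    · intro h x
      calc ENNReal.ofReal |fval a x - fval b (Φ x)| ≤ ENNReal.ofReal (ε : ℝ) :=
            ENNReal.ofReal_le_ofReal (h x)
        _ = (ε : ℝ≥0∞) := ENNReal.ofReal_coe_nnreal
    · intro h x
      have h1 := h x
      rw [← ENNReal.ofReal_coe_nnreal] at h1
      exact (ENNReal.ofReal_le_ofReal_iff ε.coe_nonneg).1 h1
  unfold interleavingDist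
  apply le_antisymm
  · refine le_iInf fun Φ => ?_
    by_cases hD : (⨆ x : a.left, ENNReal.ofReal |fval a x - fval b (Φ x)|) = ∞
    · rw [hD]; exact le_top
    · have hε : (⨆ x : a.left, ENNReal.ofReal |fval a x - fval b (Φ x)|)
          = ((⨆ x : a.left, ENNReal.ofReal |fval a x - fval b (Φ x)|).toNNReal : ℝ≥0∞) :=
        (ENNReal.coe_toNNReal hD).symm
      rw [hε]
      exact sInf_le ⟨_, rfl, (weaklyInterleaved_iff_exists a b _).2
        ⟨Φ, (key _ Φ).2 hε.le⟩⟩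
  · refine le_sInf fun r hr => ?_
    obtain ⟨ε, rfl, hw⟩ := hr
    obtain ⟨Φ, hΦ⟩ := (weaklyInterleaved_iff_exists a b ε).1 hw
    exact iInf_le_of_le Φ ((key ε Φ).1 hΦ)
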